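/- Let D_min ⊆ D_max be closed densely defined operators between Hilbert spaces, and suppose there is a bounded surjection γ : dom(D_max) → Ȟ (graph norm on the domain) with ker γ = dom(D_min). Then for any closed subspace B ⊆ Ȟ, the operator D_B := D_max restricted to γ⁻¹(B) is a closed operator, and B ↦ D_B is a bijection between closed subspaces of Ȟ and closed extensions of D_min contained in D_max. -/

import Mathlib

/-- Let `γ : X → Ȟ` be a bounded surjection of Banach spaces, where
`X = dom(D_max)` with the graph norm and `ker γ = dom(D_min)`.  Closed extensions of
`D_min` contained in `D_max` correspond to their graph-norm closed domains, i.e. closed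
subspaces of `X` containing `ker γ`.  Then for every closed subspace `B ⊆ Ȟ` the preimage
`γ⁻¹(B)` (the domain of `D_B`, so `D_B` is a closed operator) is closed and contains
`ker γ`, and `B ↦ γ⁻¹(B)` is a bijection from closed subspaces of `Ȟ` onto closed
subspaces of `X` containing `ker γ`. -/
theorem stmt_11 {X HV : Type*}
    [NormedAddCommGroup X] [NormedSpace ℂ X] [CompleteSpace X]
    [NormedAddCommGroup HV] [NormedSpace ℂ HV] [CompleteSpace HV]
    (γ : X →L[ℂ] HV) (hsurj : Function.Surjective γ) :
    (∀ B : Submodule ℂ HV, IsClosed (B : Set HV) →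
      IsClosed ((B.comap (γ : X →ₗ[ℂ] HV) : Submodule ℂ X) : Set X) ∧
        LinearMap.ker (γ : X →ₗ[ℂ] HV) ≤ B.comap (γ : X →ₗ[ℂ] HV)) ∧
    (∀ C : Submodule ℂ X, IsClosed (C : Set X) → LinearMap.ker (γ : X →ₗ[ℂ] HV) ≤ C →
      ∃! B : Submodule ℂ HV, IsClosed (B : Set HV) ∧ B.comap (γ : X →ₗ[ℂ] HV) = C) := by
  have hopen : IsOpenMap γ := γ.isOpenMap hsurj
  constructor
  · intro B hB
    refine ⟨hB.preimage γ.continuous, ?_⟩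
    intro x hx
    simp only [LinearMap.mem_ker] at hx
    simp [Submodule.mem_comap, hx]
  · intro C hC hker
    refine ⟨Submodule.map (γ : X →ₗ[ℂ] HV) C, ⟨?_, ?_⟩, ?_⟩
    · -- image of closed set under open surjection with γ⁻¹(γ C) = C is closed
      have hpre : γ ⁻¹' ((γ : X →ₗ[ℂ] HV) '' (C : Set X)) = (C : Set X) := by
        apply subset_antisymm
        · intro x hx
          obtain ⟨y, hy, hxy⟩ := hx
          have : x - y ∈ LinearMap.ker (γ : X →ₗ[ℂ] HV) := by
            simp [LinearMap.mem_ker, map_sub, hxy]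
          have hxy' : x - y ∈ C := hker this
          have := C.add_mem hxy' hy
          simpa using this
        · intro x hx
          exact ⟨x, hx, rfl⟩
      have : IsOpen ((γ : X →ₗ[ℂ] HV) '' (C : Set X))ᶜ := by
        have himg : ((γ : X →ₗ[ℂ] HV) '' (C : Set X))ᶜ = γ '' ((C : Set X)ᶜ) := by
          apply subset_antisymm
          · intro y hy
            obtain ⟨x, hx⟩ := hsurj y
            refine ⟨x, ?_, hx⟩
            intro hxC
            exact hy ⟨x, hxC, hx⟩
          · rintro y ⟨x, hx, rfl⟩ hy
            have : x ∈ γ ⁻¹' ((γ : X →ₗ[ℂ] HV) '' (C : Set X)) := hy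
            rw [hpre] at this
            exact hx this
        rw [himg]
        exact hopen _ hC.isOpen_compl
      simpa [Submodule.map_coe] using isOpen_compl_iff.mp this
    · rw [Submodule.comap_map_eq]
      exact sup_eq_left.mpr hker
    · intro B' ⟨hB'closed, hB'⟩
      have := Submodule.map_comap_eq_of_surjective (f := (γ : X →ₗ[ℂ] HV)) hsurj B'
      rw [← this, hB']
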